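/- Let X_u, X_v, and X'_u be mutually independent random variables, with X'_u having the same distribution as X_u (an independent 'replicate' of the model-form-uncertainty group). Let f be a measurable function of the two groups such that f(X_u, X_v) is square-integrable. Then the numerator of the grouped total Sobol' index satisfies the pick-freeze identity E[ Var(f(X_u, X_v) | X_v) ] = (1/2) · E[ ( f(X_u, X_v) − f(X'_u, X_v) )² ]. -/

import Mathlib

open MeasureTheory ProbabilityTheory

/-- The conditional variance of a real random variable `f` given a sub-σ-algebra `m`:
`Var(f | m) = E[f² | m] − (E[f | m])²`. -/
noncomputable def cVar {Ω : Type*} (m : MeasurableSpace Ω) {m0 : MeasurableSpace Ω}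
    (μ : Measure Ω) (f : Ω → ℝ) : Ω → ℝ :=
  fun ω => (μ[fun ω' => f ω' ^ 2 | m]) ω - ((μ[f | m]) ω) ^ 2

/-- **Pick-freeze identity for the numerator of the grouped total Sobol' index.**
Let `X_u, X_v, X'_u` be mutually independent (encoded as `X_u ⊥ X_v` together with
`(X_u, X_v) ⊥ X'_u`), with `X'_u` distributed as `X_u`.  Then
`E[ Var(f(X_u, X_v) | X_v) ] = (1/2) · E[ ( f(X_u, X_v) − f(X'_u, X_v) )² ]`. -/
theorem pick_freeze_total_index_numerator
    {Ω U V : Type*} [MeasurableSpace Ω] [MeasurableSpace U] [MeasurableSpace V]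
    {μ : Measure Ω} [IsProbabilityMeasure μ]
    (Xu Xu' : Ω → U) (Xv : Ω → V)
    (hXu : Measurable Xu) (hXu' : Measurable Xu') (hXv : Measurable Xv)
    -- mutual independence of `X_u`, `X_v`, `X'_u`:
    (hUV : IndepFun Xu Xv μ)
    (hUVU' : IndepFun (fun ω => (Xu ω, Xv ω)) Xu' μ)
    -- `X'_u` is a replicate of `X_u`:
    (hid : IdentDistrib Xu' Xu μ μ)
    (f : U × V → ℝ) (hf : Measurable f)
    (hL2 : MemLp (fun ω => f (Xu ω, Xv ω)) 2 μ) :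
    ∫ ω, cVar (MeasurableSpace.comap Xv inferInstance) μ (fun ω' => f (Xu ω', Xv ω')) ω ∂μ
      = (1 / 2) * ∫ ω, (f (Xu ω, Xv ω) - f (Xu' ω, Xv ω)) ^ 2 ∂μ := by
  set νu : Measure U := μ.map Xu with hνu
  set νv : Measure V := μ.map Xv with hνv
  haveI : IsProbabilityMeasure νu := Measure.isProbabilityMeasure_map hXu.aemeasurable
  haveI : IsProbabilityMeasure νv := Measure.isProbabilityMeasure_map hXv.aemeasurable
  set ρ : Measure (U × V) := νu.prod νv with hρ
  haveI : IsProbabilityMeasure ρ := by infer_instance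
  have hXuv : Measurable fun ω => (Xu ω, Xv ω) := hXu.prodMk hXv
  -- laws
  have hmap2 : μ.map (fun ω => (Xu ω, Xv ω)) = ρ :=
    (indepFun_iff_map_prod_eq_prod_map_map hXu.aemeasurable hXv.aemeasurable).mp hUV
  have hmap3 : μ.map (fun ω => ((Xu ω, Xv ω), Xu' ω)) = ρ.prod νu := by
    rw [(indepFun_iff_map_prod_eq_prod_map_map hXuv.aemeasurable hXu'.aemeasurable).mp hUVU',
      hmap2, hid.map_eq]
  -- transfer `MemLp` to the product law
  have hfρ : MemLp f 2 ρ := by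
    rw [← hmap2]
    exact (memLp_map_measure_iff hf.aestronglyMeasurable hXuv.aemeasurable).mpr hL2
  have hf2ρ : Integrable (fun p => f p ^ 2) ρ := hfρ.integrable_sq
  have hf1ρ : Integrable f ρ := hfρ.integrable one_le_two
  -- the conditional mean function
  set g : V → ℝ := fun v => ∫ u, f (u, v) ∂νu with hg
  have hg_sm : StronglyMeasurable g := hf.stronglyMeasurable.integral_prod_left'
  -- g is square integrable
  have hq_int : Integrable (fun v => ∫ u, f (u, v) ^ 2 ∂νu) νv :=
    hf2ρ.integral_prod_right
  have hae : ∀ᵐ v ∂νv, MemLp (fun u => f (u, v)) 2 νu := by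
    filter_upwards [hf2ρ.prod_left_ae] with v hv
    exact (memLp_two_iff_integrable_sq
      ((hf.comp (measurable_id.prodMk measurable_const)).aestronglyMeasurable)).mpr hv
  have hg_sq_le : ∀ᵐ v ∂νv, g v ^ 2 ≤ ∫ u, f (u, v) ^ 2 ∂νu := by
    filter_upwards [hae] with v hv
    have h1 := variance_nonneg (fun u => f (u, v)) νu
    rw [variance_eq_sub hv] at h1
    have h2 : (νu[(fun u => f (u, v)) ^ 2]) = ∫ u, f (u, v) ^ 2 ∂νu := by
      simp [Pi.pow_apply]
    rw [h2] at h1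
    linarith
  have hg2_int : Integrable (fun v => g v ^ 2) νv := by
    refine Integrable.mono' hq_int ((hg_sm.pow 2).aestronglyMeasurable) ?_
    filter_upwards [hg_sq_le] with v hv
    rwa [Real.norm_eq_abs, abs_of_nonneg (sq_nonneg _)]
  have hgL2 : MemLp g 2 νv :=
    (memLp_two_iff_integrable_sq hg_sm.aestronglyMeasurable).mpr hg2_int
  have hgXvL2 : MemLp (fun ω => g (Xv ω)) 2 μ := by
    rw [hνv] at hgL2
    exact (memLp_map_measure_iff hg_sm.aestronglyMeasurable hXv.aemeasurable).mp hgL2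
  -- sub-σ-algebra facts
  have hm : MeasurableSpace.comap Xv inferInstance ≤ (inferInstance : MeasurableSpace Ω) :=
    hXv.comap_le
  haveI : SigmaFinite (μ.trim hm) := by
    haveI : IsFiniteMeasure (μ.trim hm) := by
      constructor
      rw [trim_measurableSet_eq hm (@MeasurableSet.univ Ω (MeasurableSpace.comap Xv inferInstance))]
      exact measure_lt_top μ _
    infer_instance
  have hY_int : Integrable (fun ω => f (Xu ω, Xv ω)) μ := hL2.integrable one_le_two
  -- identification of the conditional expectation: E[f(Xu,Xv) | σ(Xv)] = g ∘ Xv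
  have hcond : (fun ω => g (Xv ω)) =ᵐ[μ] μ[(fun ω' => f (Xu ω', Xv ω')) | MeasurableSpace.comap Xv inferInstance] := by
    refine ae_eq_condExp_of_forall_setIntegral_eq hm hY_int
      (fun s _ _ => (hgXvL2.integrable one_le_two).integrableOn) ?_ ?_
    · rintro s ⟨t, ht, rfl⟩ -
      -- LHS: set integral of g ∘ Xv
      have h1 : ∫ ω in Xv ⁻¹' t, g (Xv ω) ∂μ = ∫ v in t, g v ∂νv := by
        rw [hνv, setIntegral_map ht hg_sm.aestronglyMeasurable hXv.aemeasurable]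
      -- RHS: set integral of f ∘ (Xu, Xv)
      have hpre : Xv ⁻¹' t = (fun ω => (Xu ω, Xv ω)) ⁻¹' (Set.univ ×ˢ t) := by
        ext ω; simp
      have h2 : ∫ ω in Xv ⁻¹' t, f (Xu ω, Xv ω) ∂μ = ∫ p in Set.univ ×ˢ t, f p ∂ρ := by
        rw [hpre, ← hmap2,
          setIntegral_map (MeasurableSet.univ.prod ht)
            (hf.aestronglyMeasurable.mono_measure le_rfl) hXuv.aemeasurable]
      have hres : ρ.restrict (Set.univ ×ˢ t) = νu.prod (νv.restrict t) := by
        rw [hρ, ← Measure.prod_restrict, Measure.restrict_univ]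
      have h3 : ∫ p in Set.univ ×ˢ t, f p ∂ρ = ∫ v in t, g v ∂νv := by
        rw [show (∫ p in Set.univ ×ˢ t, f p ∂ρ) = ∫ p, f p ∂(ρ.restrict (Set.univ ×ˢ t))
            from rfl, hres, integral_prod_symm f (by rw [← hres]; exact hf1ρ.restrict)]
      rw [h1, h2, h3]
    · exact StronglyMeasurable.aestronglyMeasurable
        (hg_sm.comp_measurable (Measurable.of_comap_le le_rfl))
  -- square-integrability of the conditional expectation
  have hcond_sq : (fun ω => g (Xv ω) ^ 2)
      =ᵐ[μ] fun ω => ((μ[(fun ω' => f (Xu ω', Xv ω')) | MeasurableSpace.comap Xv inferInstance]) ω) ^ 2 := by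
    filter_upwards [hcond] with ω h; rw [h]
  have h_sq_int : Integrable (fun ω => ((μ[(fun ω' => f (Xu ω', Xv ω')) | MeasurableSpace.comap Xv inferInstance]) ω) ^ 2) μ :=
    hgXvL2.integrable_sq.congr hcond_sq
  -- abbreviations for the two key integrals
  set S : ℝ := ∫ p, f p ^ 2 ∂ρ with hS
  set G : ℝ := ∫ v, g v ^ 2 ∂νv with hG
  -- LHS = S - G
  have hY2_int : Integrable (fun ω => f (Xu ω, Xv ω) ^ 2) μ := hL2.integrable_sq
  have hLHS : ∫ ω, cVar (MeasurableSpace.comap Xv inferInstance) μ (fun ω' => f (Xu ω', Xv ω')) ω ∂μ = S - G := by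
    have hsplit : ∫ ω, cVar (MeasurableSpace.comap Xv inferInstance) μ (fun ω' => f (Xu ω', Xv ω')) ω ∂μ
        = (∫ ω, (μ[(fun ω' => f (Xu ω', Xv ω') ^ 2) | MeasurableSpace.comap Xv inferInstance]) ω ∂μ)
          - ∫ ω, ((μ[(fun ω' => f (Xu ω', Xv ω')) | MeasurableSpace.comap Xv inferInstance]) ω) ^ 2 ∂μ := by
      simp only [cVar]
      exact integral_sub integrable_condExp h_sq_int
    have e1 : ∫ ω, (μ[(fun ω' => f (Xu ω', Xv ω') ^ 2) | MeasurableSpace.comap Xv inferInstance]) ω ∂μ = S := by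
      rw [integral_condExp hm, hS, ← hmap2]
      exact (integral_map hXuv.aemeasurable ((hf.pow_const 2).aestronglyMeasurable)).symm
    have e2 : ∫ ω, ((μ[(fun ω' => f (Xu ω', Xv ω')) | MeasurableSpace.comap Xv inferInstance]) ω) ^ 2 ∂μ = G := by
      rw [← integral_congr_ae hcond_sq, hG, hνv]
      exact (integral_map hXv.aemeasurable
        ((hg_sm.measurable.pow_const 2).aestronglyMeasurable)).symm
    rw [hsplit, e1, e2]
  -- the pick-freeze map and measure-preserving facts
  set T : (U × V) × U → U × V := fun p => (p.2, p.1.2) with hT_def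
  have hT_meas : Measurable T := measurable_snd.prodMk (measurable_fst.snd)
  have hfst3 : MeasurePreserving (Prod.fst : (U × V) × U → U × V) (ρ.prod νu) ρ :=
    ⟨measurable_fst, by simp [Measure.map_fst_prod]⟩
  have hsnd2 : MeasurePreserving (Prod.snd : U × V → V) ρ νv :=
    ⟨measurable_snd, by simp [hρ, Measure.map_snd_prod]⟩
  have hT : MeasurePreserving T (ρ.prod νu) ρ := by
    have h1 : MeasurePreserving (Prod.map (id : U → U) (Prod.snd : U × V → V))
        (νu.prod ρ) (νu.prod νv) := (MeasurePreserving.id νu).prod hsnd2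
    have h2 := h1.comp (Measure.measurePreserving_swap (μ := ρ) (ν := νu))
    exact h2
  -- integrability on the triple-product law
  have hA2 : Integrable (fun p : (U × V) × U => f p.1 ^ 2) (ρ.prod νu) :=
    (hfst3.integrable_comp ((hf.pow_const 2).aestronglyMeasurable)).mpr hf2ρ
  have hB2 : Integrable (fun p : (U × V) × U => f (T p) ^ 2) (ρ.prod νu) :=
    (hT.integrable_comp ((hf.pow_const 2).aestronglyMeasurable)).mpr hf2ρ
  have hAB : Integrable (fun p : (U × V) × U => f p.1 * f (T p)) (ρ.prod νu) := by
    refine Integrable.mono' (hA2.add hB2)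
      (((hf.comp measurable_fst).mul (hf.comp hT_meas)).aestronglyMeasurable) ?_
    refine Filter.Eventually.of_forall fun p => ?_
    simp only [Pi.add_apply]
    rw [Real.norm_eq_abs, abs_mul]
    nlinarith [sq_nonneg (|f p.1| - |f (T p)|), sq_abs (f p.1), sq_abs (f (T p)),
      abs_nonneg (f p.1), abs_nonneg (f (T p))]
  -- the three integrals over the triple law
  have eA : ∫ p, f p.1 ^ 2 ∂(ρ.prod νu) = S := by
    have h : ∫ y, f y ^ 2 ∂(Measure.map Prod.fst (ρ.prod νu))
        = ∫ p : (U × V) × U, f p.1 ^ 2 ∂(ρ.prod νu) :=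
      integral_map measurable_fst.aemeasurable ((hf.pow_const 2).aestronglyMeasurable)
    rw [hfst3.map_eq] at h
    rw [hS, ← h]
  have eB : ∫ p, f (T p) ^ 2 ∂(ρ.prod νu) = S := by
    have h : ∫ y, f y ^ 2 ∂(Measure.map T (ρ.prod νu))
        = ∫ p : (U × V) × U, f (T p) ^ 2 ∂(ρ.prod νu) :=
      integral_map hT_meas.aemeasurable ((hf.pow_const 2).aestronglyMeasurable)
    rw [hT.map_eq] at h
    rw [hS, ← h]
  have hC : Integrable (fun x : U × V => f x * g x.2) ρ := by
    have hg2c : Integrable (fun x : U × V => g x.2 ^ 2) ρ :=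
      (hsnd2.integrable_comp ((hg_sm.measurable.pow_const 2).aestronglyMeasurable)).mpr hg2_int
    refine Integrable.mono' (hf2ρ.add hg2c)
      ((hf.mul (hg_sm.measurable.comp measurable_snd)).aestronglyMeasurable) ?_
    refine Filter.Eventually.of_forall fun x => ?_
    simp only [Pi.add_apply]
    rw [Real.norm_eq_abs, abs_mul]
    nlinarith [sq_nonneg (|f x| - |g x.2|), sq_abs (f x), sq_abs (g x.2),
      abs_nonneg (f x), abs_nonneg (g x.2)]
  have eAB : ∫ p, f p.1 * f (T p) ∂(ρ.prod νu) = G := by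
    have step1 : ∫ p, f p.1 * f (T p) ∂(ρ.prod νu) = ∫ x : U × V, f x * g x.2 ∂ρ := by
      rw [integral_prod _ hAB]
      refine integral_congr_ae (Filter.Eventually.of_forall fun x => ?_)
      show (∫ u', f x * f (u', x.2) ∂νu) = f x * g x.2
      rw [integral_const_mul]
    have step2 : ∫ x : U × V, f x * g x.2 ∂ρ = G := by
      rw [integral_prod_symm _ hC]
      refine Eq.trans (integral_congr_ae (Filter.Eventually.of_forall fun v => ?_)) hG.symm
      show (∫ u, f (u, v) * g v ∂νu) = g v ^ 2
      rw [integral_mul_const, pow_two]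
    rw [step1, step2]
  -- RHS = (1/2)(2S - 2G)
  have hRHS : ∫ ω, (f (Xu ω, Xv ω) - f (Xu' ω, Xv ω)) ^ 2 ∂μ = 2 * S - 2 * G := by
    have hstep : ∫ ω, (f (Xu ω, Xv ω) - f (Xu' ω, Xv ω)) ^ 2 ∂μ
        = ∫ p, (f p.1 - f (T p)) ^ 2 ∂(ρ.prod νu) := by
      rw [← hmap3]
      exact (integral_map (hXuv.prodMk hXu').aemeasurable
        ((((hf.comp measurable_fst).sub (hf.comp hT_meas)).pow_const
          2).aestronglyMeasurable)).symm
    rw [hstep]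
    have hexp : ∫ p, (f p.1 - f (T p)) ^ 2 ∂(ρ.prod νu)
        = ∫ p, (f p.1 ^ 2 + f (T p) ^ 2 - 2 * (f p.1 * f (T p))) ∂(ρ.prod νu) :=
      integral_congr_ae (Filter.Eventually.of_forall fun p => by ring)
    have h1 : ∫ p, (f p.1 ^ 2 + f (T p) ^ 2 - 2 * (f p.1 * f (T p))) ∂(ρ.prod νu)
        = (∫ p, (f p.1 ^ 2 + f (T p) ^ 2) ∂(ρ.prod νu))
          - ∫ p, 2 * (f p.1 * f (T p)) ∂(ρ.prod νu) :=
      integral_sub (hA2.add hB2) (hAB.const_mul 2)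
    have h2 : ∫ p, (f p.1 ^ 2 + f (T p) ^ 2) ∂(ρ.prod νu)
        = (∫ p, f p.1 ^ 2 ∂(ρ.prod νu)) + ∫ p, f (T p) ^ 2 ∂(ρ.prod νu) :=
      integral_add hA2 hB2
    rw [hexp, h1, h2, integral_const_mul, eA, eB, eAB]
    ring
  rw [hLHS, hRHS]
  ring
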